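/- Let A be the (0,1) block matrix with blocks J_{s,p}, J_{s,r} in the first block row and J_{q−s,p}, 0_{q−s,r} in the second block row, where J denotes an all-ones matrix and 0 an all-zeros matrix (with 1 ≤ s ≤ q and p, r ≥ 1). Then the trace norm of A equals √(rs + pq + 2√(p·r·s·(q−s))). -/

import Mathlib

open Matrix BigOperators

/-- The (unordered) singular values of a complex matrix `A`: square roots of the
eigenvalues of `Aᴴ * A`. -/
noncomputable def singVals {m n : ℕ} (A : Matrix (Fin m) (Fin n) ℂ) : Fin n → ℝ :=
  fun i => Real.sqrt ((Matrix.isHermitian_conjTranspose_mul_self A).eigenvalues i)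

/-- The trace norm: sum of the singular values. -/
noncomputable def traceNorm {m n : ℕ} (A : Matrix (Fin m) (Fin n) ℂ) : ℝ :=
  ∑ i, singVals A i

/-- The Frobenius norm. -/
noncomputable def frobNorm {m n : ℕ} (A : Matrix (Fin m) (Fin n) ℂ) : ℝ :=
  Real.sqrt (∑ i, ∑ j, ‖A i j‖ ^ 2)

/-- `sigma A k` is the `k`-th largest singular value of `A` (1-indexed), `0` if out of range. -/
noncomputable def sigma {m n : ℕ} (A : Matrix (Fin m) (Fin n) ℂ) (k : ℕ) : ℝ :=
  if h : 1 ≤ k ∧ k ≤ n then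
    singVals A (Tuple.sort (singVals A) ⟨n - k, by omega⟩)
  else 0

/-- Number of entries of `A` equal to `1`. -/
noncomputable def onesCount {a b : ℕ} (A : Matrix (Fin a) (Fin b) ℂ) : ℕ := by
  classical
  exact Finset.card (Finset.univ.filter fun p : Fin a × Fin b => A p.1 p.2 = 1)

/-- Minimum trace norm of an `n × n` (0,1)-matrix with exactly `m` ones. -/
noncomputable def psi (n m : ℕ) : ℝ :=
  sInf {x | ∃ A : Matrix (Fin n) (Fin n) ℂ, (∀ i j, A i j = 0 ∨ A i j = 1) ∧
    onesCount A = m ∧ traceNorm A = x}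

/- ## Auxiliary lemmas -/

lemma aux_cardlt (q s : ℕ) (h : s ≤ q) :
    ((Finset.univ : Finset (Fin q)).filter fun k : Fin q => (k:ℕ) < s).card = s := by
  rw [show ((Finset.univ : Finset (Fin q)).filter fun k : Fin q => (k:ℕ) < s)
      = (Finset.univ : Finset (Fin s)).map ⟨Fin.castLE h, Fin.castLE_injective h⟩ by
    ext k
    simp only [Finset.mem_filter, Finset.mem_univ, true_and, Finset.mem_map,
      Function.Embedding.coeFn_mk]
    constructor
    · intro hk; exact ⟨⟨k, hk⟩, rfl⟩
    · rintro ⟨i, rfl⟩; exact i.2]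
  simp

lemma aux_sum_if_lt (n s : ℕ) (h : s ≤ n) (a b : ℂ) :
    ∑ k : Fin n, (if (k:ℕ) < s then a else b) = s * a + (n - s : ℕ) * b := by
  rw [Finset.sum_ite]
  simp only [Finset.sum_const, nsmul_eq_mul, aux_cardlt n s h]
  rw [Finset.filter_not, Finset.card_sdiff_of_subset (Finset.filter_subset _ _), aux_cardlt n s h]
  simp

lemma aux_trace_eq_sum_eig {n : ℕ} {M : Matrix (Fin n) (Fin n) ℂ} (hM : M.IsHermitian) :
    M.trace = ∑ i, (hM.eigenvalues i : ℂ) := by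
  have hU : (star (hM.eigenvectorUnitary : Matrix (Fin n) (Fin n) ℂ)) *
      (hM.eigenvectorUnitary : Matrix (Fin n) (Fin n) ℂ) = 1 :=
    (Matrix.mem_unitaryGroup_iff').mp (hM.eigenvectorUnitary).2
  conv_lhs => rw [hM.spectral_theorem, Unitary.conjStarAlgAut_apply]
  rw [Matrix.trace_mul_cycle, hU, Matrix.one_mul, Matrix.trace_diagonal]
  simp

lemma aux_trace_sq_eq_sum_eig {n : ℕ} {M : Matrix (Fin n) (Fin n) ℂ} (hM : M.IsHermitian) :
    (M * M).trace = ∑ i, (hM.eigenvalues i : ℂ)^2 := by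
  have hU : (star (hM.eigenvectorUnitary : Matrix (Fin n) (Fin n) ℂ)) *
      (hM.eigenvectorUnitary : Matrix (Fin n) (Fin n) ℂ) = 1 :=
    (Matrix.mem_unitaryGroup_iff').mp (hM.eigenvectorUnitary).2
  set U := (hM.eigenvectorUnitary : Matrix (Fin n) (Fin n) ℂ)
  set D := Matrix.diagonal (RCLike.ofReal ∘ hM.eigenvalues : Fin n → ℂ)
  conv_lhs => rw [hM.spectral_theorem, Unitary.conjStarAlgAut_apply]
  have h2 : ∀ X : Matrix (Fin n) (Fin n) ℂ, star U * (U * X) = X := fun X => by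
    rw [← Matrix.mul_assoc, hU, Matrix.one_mul]
  have : (U * D * star U) * (U * D * star U) = U * (D * D) * star U := by
    simp only [Matrix.mul_assoc]
    rw [h2]
  rw [this, Matrix.trace_mul_cycle, ← Matrix.mul_assoc, hU, Matrix.one_mul,
    Matrix.diagonal_mul_diagonal, Matrix.trace_diagonal]
  simp [pow_two]

lemma aux_key2 {ι : Type*} [DecidableEq ι] (f : ι → ℝ) (hf : ∀ i, 0 ≤ f i) (T D : ℝ)
    (hD : 0 ≤ D) (S : Finset ι) (hcard : S.card ≤ 2)
    (r1 : ∑ i ∈ S, f i = T) (r2 : ∑ i ∈ S, (f i)^2 = T^2 - 2*D) :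
    ∑ i ∈ S, Real.sqrt (f i) = Real.sqrt (T + 2 * Real.sqrt D) := by
  interval_cases h : S.card
  · obtain rfl : S = ∅ := Finset.card_eq_zero.mp h
    simp only [Finset.sum_empty] at r1 r2 ⊢
    have hT : T = 0 := r1.symm
    have hD0 : D = 0 := by nlinarith
    rw [hT, hD0]; simp
  · obtain ⟨a, rfl⟩ := Finset.card_eq_one.mp h
    simp only [Finset.sum_singleton] at r1 r2 ⊢
    rw [r1] at r2
    have hD0 : D = 0 := by linarith
    rw [hD0, Real.sqrt_zero, mul_zero, add_zero, r1]
  · obtain ⟨a, b, hab, rfl⟩ := Finset.card_eq_two.mp h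
    rw [Finset.sum_insert (by simpa using hab), Finset.sum_singleton] at r1 r2 ⊢
    have hD' : f a * f b = D := by
      have h3 : (f a + f b)^2 = f a^2 + f b^2 + 2*(f a * f b) := by ring
      rw [r1] at h3; linarith
    have hs : Real.sqrt (f a) * Real.sqrt (f b) = Real.sqrt D := by
      rw [← Real.sqrt_mul (hf a), hD']
    have : T + 2 * Real.sqrt D = (Real.sqrt (f a) + Real.sqrt (f b))^2 := by
      rw [add_sq, Real.sq_sqrt (hf a), Real.sq_sqrt (hf b), mul_assoc, hs]
      linarith
    rw [this, Real.sqrt_sq (by positivity)]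

lemma aux_key {ι : Type*} [Fintype ι] [DecidableEq ι] (f : ι → ℝ) (hf : ∀ i, 0 ≤ f i) (T D : ℝ)
    (hD : 0 ≤ D)
    (hcard : (Finset.univ.filter fun i => f i ≠ 0).card ≤ 2)
    (h1 : ∑ i, f i = T) (h2 : ∑ i, (f i)^2 = T^2 - 2*D) :
    ∑ i, Real.sqrt (f i) = Real.sqrt (T + 2 * Real.sqrt D) := by
  classical
  have restrict : ∀ g : ℝ → ℝ, g 0 = 0 →
      ∑ i ∈ (Finset.univ.filter fun i => f i ≠ 0), g (f i) = ∑ i, g (f i) := by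
    intro g hg
    apply Finset.sum_subset (Finset.subset_univ _)
    intro x _ hx
    simp only [Finset.mem_filter, Finset.mem_univ, true_and, not_not] at hx
    rw [hx, hg]
  rw [← restrict Real.sqrt Real.sqrt_zero]
  exact aux_key2 f hf T D hD _ hcard (by rw [restrict (fun x => x) rfl]; exact h1)
    (by rw [restrict (fun x => x^2) (by norm_num)]; exact h2)

lemma aux_entry (p q r s : ℕ) (A : Matrix (Fin q) (Fin (p + r)) ℂ) (hsq : s ≤ q)
    (hA : ∀ i j, A i j = if (i : ℕ) < s ∨ (j : ℕ) < p then 1 else 0) (i j : Fin (p+r)) :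
    (Aᴴ * A) i j = if (i:ℕ) < p ∧ (j:ℕ) < p then (q:ℂ) else (s:ℂ) := by
  rw [Matrix.mul_apply]
  by_cases hb : (i:ℕ) < p ∧ (j:ℕ) < p
  · rw [if_pos hb]
    have hterm : ∀ k : Fin q, (Aᴴ) i k * A k j = 1 := by
      intro k
      simp [Matrix.conjTranspose_apply, hA, hb.1, hb.2]
    rw [Finset.sum_congr rfl fun k _ => hterm k]
    simp [Finset.card_univ]
  · rw [if_neg hb]
    have hterm : ∀ k : Fin q, (Aᴴ) i k * A k j = if (k:ℕ) < s then 1 else 0 := by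
      intro k
      by_cases hk : (k:ℕ) < s
      · simp [Matrix.conjTranspose_apply, hA, hk]
      · rcases not_and_or.mp hb with hi | hj
        · simp [Matrix.conjTranspose_apply, hA, hk, hi]
        · simp [Matrix.conjTranspose_apply, hA, hk, hj]
    rw [Finset.sum_congr rfl fun k _ => hterm k]
    simpa using aux_sum_if_lt q s hsq 1 0

lemma aux_rank (p q r s : ℕ) (A : Matrix (Fin q) (Fin (p + r)) ℂ)
    (hA : ∀ i j, A i j = if (i : ℕ) < s ∨ (j : ℕ) < p then 1 else 0) :
    A.rank ≤ 2 := by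
  classical
  set B : Matrix (Fin q) (Fin 2) ℂ := fun i t =>
    if t = 0 then (if (i:ℕ) < s then 1 else 0) else (if (i:ℕ) < s then 0 else 1) with hB
  set C : Matrix (Fin 2) (Fin (p+r)) ℂ := fun t j =>
    if t = 0 then 1 else (if (j:ℕ) < p then 1 else 0) with hC
  have hBC : A = B * C := by
    ext i j
    rw [Matrix.mul_apply, Fin.sum_univ_two, hA]
    by_cases hi : (i:ℕ) < s <;> by_cases hj : (j:ℕ) < p <;>
      simp [hB, hC, hi, hj]
  calc A.rank = (B * C).rank := by rw [hBC]
    _ ≤ B.rank := Matrix.rank_mul_le_left B C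
    _ ≤ Fintype.card (Fin 2) := B.rank_le_card_width
    _ = 2 := by simp

open scoped ComplexOrder

/-- trace norm of the two-step block matrix. -/
theorem stmt4 (p q r s : ℕ) (hp : 1 ≤ p) (hr : 1 ≤ r) (hs : 1 ≤ s) (hsq : s ≤ q)
    (A : Matrix (Fin q) (Fin (p + r)) ℂ)
    (hA : ∀ i j, A i j = if (i : ℕ) < s ∨ (j : ℕ) < p then 1 else 0) :
    traceNorm A =
      Real.sqrt (((r * s + p * q : ℕ) : ℝ) +
        2 * Real.sqrt ((p * r * s * (q - s) : ℕ) : ℝ)) := by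
  classical
  have hM : (Aᴴ * A).IsHermitian := Matrix.isHermitian_conjTranspose_mul_self A
  set e : Fin (p+r) → ℝ := hM.eigenvalues with he
  have hf : ∀ i, 0 ≤ e i := fun i => Matrix.eigenvalues_conjTranspose_mul_self_nonneg A i
  -- trace of M
  have htr : (Aᴴ * A).trace = ((r * s + p * q : ℕ) : ℂ) := by
    rw [Matrix.trace]
    have : ∀ i : Fin (p+r), (Aᴴ * A).diag i = if (i:ℕ) < p then (q:ℂ) else (s:ℂ) := by
      intro i
      rw [Matrix.diag_apply, aux_entry p q r s A hsq hA i i]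
      simp only [and_self]
    rw [Finset.sum_congr rfl fun i _ => this i, aux_sum_if_lt (p+r) p (by omega) _ _]
    have : (p + r - p : ℕ) = r := by omega
    rw [this]
    push_cast
    ring
  -- trace of M²
  have htr2 : ((Aᴴ * A) * (Aᴴ * A)).trace
      = ((r * s + p * q : ℕ) : ℂ)^2 - 2 * ((p * r * s * (q - s) : ℕ) : ℂ) := by
    rw [Matrix.trace]
    have hdiag : ∀ i : Fin (p+r), ((Aᴴ * A) * (Aᴴ * A)).diag i
        = if (i:ℕ) < p then (p:ℂ)*((q:ℂ)*q) + (r:ℂ)*((s:ℂ)*s) else ((p:ℂ)+(r:ℂ))*((s:ℂ)*s) := by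
      intro i
      rw [Matrix.diag_apply, Matrix.mul_apply]
      have hterm : ∀ j : Fin (p+r), (Aᴴ * A) i j * (Aᴴ * A) j i
          = if (i:ℕ) < p ∧ (j:ℕ) < p then (q:ℂ)*q else (s:ℂ)*s := by
        intro j
        rw [aux_entry p q r s A hsq hA i j, aux_entry p q r s A hsq hA j i]
        by_cases hb : (i:ℕ) < p ∧ (j:ℕ) < p
        · rw [if_pos hb, if_pos ⟨hb.2, hb.1⟩, if_pos hb]
        · rw [if_neg hb, if_neg (fun h => hb ⟨h.2, h.1⟩), if_neg hb]
      rw [Finset.sum_congr rfl fun j _ => hterm j]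
      by_cases hi : (i:ℕ) < p
      · simp only [hi, true_and, if_true]
        rw [aux_sum_if_lt (p+r) p (by omega) _ _]
        have : (p + r - p : ℕ) = r := by omega
        rw [this]
      · simp only [hi, false_and, if_false]
        rw [Finset.sum_const]
        simp only [Finset.card_univ, Fintype.card_fin, nsmul_eq_mul]
        push_cast
        ring
    rw [Finset.sum_congr rfl fun i _ => hdiag i, aux_sum_if_lt (p+r) p (by omega) _ _]
    have : (p + r - p : ℕ) = r := by omega
    rw [this]
    push_cast [Nat.cast_sub hsq]
    ring
  -- real versions
  have h1 : ∑ i, e i = ((r * s + p * q : ℕ) : ℝ) := by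
    have := (aux_trace_eq_sum_eig hM).symm.trans htr
    exact_mod_cast this
  have h2 : ∑ i, (e i)^2 = ((r * s + p * q : ℕ) : ℝ)^2 - 2 * ((p * r * s * (q - s) : ℕ) : ℝ) := by
    have := (aux_trace_sq_eq_sum_eig hM).symm.trans htr2
    exact_mod_cast this
  -- card bound
  have hcard : (Finset.univ.filter fun i => e i ≠ 0).card ≤ 2 := by
    have h3 : Fintype.card {i // e i ≠ 0} = (Finset.univ.filter fun i => e i ≠ 0).card :=
      Fintype.card_subtype _
    rw [← h3, ← hM.rank_eq_card_non_zero_eigs, Matrix.rank_conjTranspose_mul_self]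
    exact aux_rank p q r s A hA
  have := aux_key e hf ((r * s + p * q : ℕ) : ℝ) ((p * r * s * (q - s) : ℕ) : ℝ)
    (Nat.cast_nonneg _) hcard h1 h2
  exact this
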